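/- arXiv:2303.07987 — 2 statements merged into one kernel-verified Lean document; each statement's English description precedes it below -/
import Mathlib

section
/- Let s ∈ ℤ₂ⁿ, A ∈ ℤ₂^{n×m} with A = [A₁ | A₂] where A₁ ∈ ℤ₂^{n×n} is invertible, and let e ∈ ℤ₂^m with e = (e₁, e₂), e₁ ∈ ℤ₂ⁿ. Define y = Aᵀs + e (so y₁ = A₁ᵀs + e₁, y₂ = A₂ᵀs + e₂), Ā = -A₁⁻¹·A₂, and ȳᵀ = y₁ᵀ·Ā + y₂ᵀ. Then ȳᵀ = e₁ᵀ·Ā + e₂ᵀ, i.e., the transformed samples (Ā, ȳ) form LPN samples whose secret is the error vector e₁. -/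
open Matrix

/-- LPN secret-to-error reduction: if `y₁ᵗ = sᵗA₁ + e₁ᵗ` and `y₂ᵗ = sᵗA₂ + e₂ᵗ`
with `A₁` invertible, and `Ā = -A₁⁻¹ A₂`, `ȳᵗ = y₁ᵗ Ā + y₂ᵗ`, then
`ȳᵗ = e₁ᵗ Ā + e₂ᵗ`: the new samples have the error `e₁` as secret. -/
theorem lpn_sparse_secret_reduction (n m : ℕ)
    (s : Fin n → ZMod 2) (A₁ : Matrix (Fin n) (Fin n) (ZMod 2))
    (A₂ : Matrix (Fin n) (Fin m) (ZMod 2))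
    (e₁ : Fin n → ZMod 2) (e₂ : Fin m → ZMod 2)
    (hA₁ : IsUnit A₁)
    (y₁ : Fin n → ZMod 2) (y₂ : Fin m → ZMod 2)
    (hy₁ : y₁ = A₁.vecMul s + e₁) (hy₂ : y₂ = A₂.vecMul s + e₂)
    (Abar : Matrix (Fin n) (Fin m) (ZMod 2)) (hAbar : Abar = -(A₁⁻¹ * A₂))
    (ybar : Fin m → ZMod 2) (hybar : ybar = Abar.vecMul y₁ + y₂) :
    ybar = Abar.vecMul e₁ + e₂ := by
  have hdet : IsUnit A₁.det := (Matrix.isUnit_iff_isUnit_det A₁).mp hA₁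
  have hinv : A₁ * A₁⁻¹ = 1 := Matrix.mul_nonsing_inv A₁ hdet
  subst hy₁ hy₂ hAbar hybar
  rw [Matrix.add_vecMul, Matrix.vecMul_vecMul, Matrix.mul_neg, ← Matrix.mul_assoc, hinv,
    Matrix.one_mul]
  simp [Matrix.vecMul_neg]
  abel
end

section
/- Fix k ∈ ℕ. Define coefficients w₁ = 1 and recursively wᵢ = (i mod 2) − Σ_{j=1}^{i−1} wⱼ(i − j + 1) for 2 ≤ i ≤ k. Then for every integer t with 0 ≤ t ≤ k, Σ_{i=1}^{k} wᵢ · max(t − i + 1, 0) = t mod 2. -/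
open Finset

/-- The ReLU-parity coefficients `w₁ = 1`, `wᵢ = (i mod 2) − Σ_{j<i} wⱼ(i−j+1)`
satisfy `Σ_{i=1}^k wᵢ · max(t−i+1, 0) = t mod 2` for every `0 ≤ t ≤ k`. -/
theorem relu_coeffs_compute_parity (k : ℕ) (w : ℕ → ℝ) (hw1 : w 1 = 1)
    (hrec : ∀ i, 2 ≤ i → i ≤ k →
      w i = ((i % 2 : ℕ) : ℝ) - ∑ j ∈ Finset.Ico 1 i, w j * ((i - j + 1 : ℕ) : ℝ)) :
    ∀ t : ℕ, t ≤ k →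
      ∑ i ∈ Finset.Icc 1 k, w i * max ((t : ℝ) - (i : ℝ) + 1) 0
        = ((t % 2 : ℕ) : ℝ) := by
  intro t ht
  have hsplit : ∑ i ∈ Finset.Icc 1 k, w i * max ((t : ℝ) - (i : ℝ) + 1) 0
      = ∑ i ∈ Finset.Icc 1 t, w i * ((t - i + 1 : ℕ) : ℝ) := by
    rw [← Finset.sum_subset (Finset.Icc_subset_Icc_right ht)]
    · apply Finset.sum_congr rfl
      intro i hi
      simp only [Finset.mem_Icc] at hi
      have h1 : (i : ℝ) ≤ t := by exact_mod_cast hi.2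
      rw [max_eq_left (by linarith), Nat.cast_add, Nat.cast_sub hi.2, Nat.cast_one]
    · intro i hik hit
      simp only [Finset.mem_Icc] at hik hit
      have h2 : t < i := by omega
      have h3 : (t : ℝ) + 1 ≤ i := by exact_mod_cast h2
      rw [max_eq_right (by linarith), mul_zero]
  rw [hsplit]
  rcases Nat.lt_or_ge t 2 with h | h
  · interval_cases t <;> simp [hw1]
  · have := hrec t h ht
    rw [← Finset.Ico_add_one_right_eq_Icc, Finset.sum_Ico_succ_top (by omega : 1 ≤ t)]
    simp only [Nat.sub_self, zero_add, Nat.cast_one, mul_one]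
    linarith [this]
end
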